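/- Let L/K be a finite Galois extension with Galois group G, V a finite-dimensional L-vector space, and T a family of commuting diagonalizable L-linear operators on V. If v ∈ V is a common eigenvector with eigenvalues (a_T), then for every σ ∈ G there exists a nonzero common eigenvector v_σ of the operators T (viewed as K-linear operators on V regarded as a K-vector space, base-changed to L) with eigenvalues (σ(a_T)). -/

import Mathlib

open TensorProduct Polynomial

/-- Let `L/K` be a finite Galois extension with Galois group `G`, `V` a
finite-dimensional `L`-vector space and `T` a family of commuting
diagonalizable `L`-linear operators on `V`.  If `v` is a nonzero common
eigenvector with eigenvalues `a T`, then for every `σ ∈ G` there is a nonzero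
common eigenvector of the operators `T` — viewed as `K`-linear operators on
`V` and base-changed to `L ⊗_K V` — with eigenvalues `σ (a T)`. -/
theorem galois_conjugate_eigenvector
    (K L : Type*) [Field K] [Field L] [Algebra K L]
    [FiniteDimensional K L] [IsGalois K L]
    (V : Type*) [AddCommGroup V] [Module K V] [Module L V] [IsScalarTower K L V] [FiniteDimensional L V]
    (ι : Type*) (T : ι → (V →ₗ[L] V))
    (hcomm : ∀ i j, Commute (T i) (T j))
    (hdiag : ∀ i, ⨆ μ : L, Module.End.eigenspace (T i) μ = ⊤)
    (v : V) (hv : v ≠ 0) (a : ι → L) (hev : ∀ i, T i v = a i • v)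
    (σ : L ≃ₐ[K] L) :
    ∃ w : L ⊗[K] V, w ≠ 0 ∧
      ∀ i, LinearMap.baseChange L ((T i).restrictScalars K) w = σ (a i) • w := by
  classical
  obtain ⟨α, hα⟩ := Field.exists_primitive_element K L
  set f : K[X] := minpoly K α with hf
  set fL : L[X] := f.map (algebraMap K L) with hfL
  have hint : IsIntegral K α := Algebra.IsIntegral.isIntegral α
  -- σ α is a root of fL
  have hroot : fL.eval (σ α) = 0 := by
    have : (Polynomial.aeval (σ α)) f = σ ((Polynomial.aeval α) f) :=
      Polynomial.aeval_algHom_apply (σ : L →ₐ[K] L) α f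
    rw [hfL, Polynomial.eval_map, ← Polynomial.aeval_def, this, minpoly.aeval, map_zero]
  obtain ⟨q, hq⟩ : (X - C (σ α)) ∣ fL := Polynomial.dvd_iff_isRoot.mpr hroot
  -- q (σ α) ≠ 0 by separability
  have hsepf : fL.Separable := by
    have : f.Separable := (Algebra.IsSeparable.isSeparable K α)
    exact this.map
  have hqev : q.eval (σ α) ≠ 0 := by
    intro h0
    obtain ⟨q₁, hq₁⟩ : (X - C (σ α)) ∣ q := Polynomial.dvd_iff_isRoot.mpr h0
    have hsq := hsepf.squarefree
    have : IsUnit (X - C (σ α)) := by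
      refine hsq (X - C (σ α)) ⟨q₁, ?_⟩
      rw [hq, hq₁]; ring
    exact Polynomial.not_isUnit_X_sub_C _ this
  -- the algebra map ψ : L[X] → L ⊗[K] L sending X to 1 ⊗ α
  set ψ : L[X] →ₐ[L] L ⊗[K] L := Polynomial.aeval ((1 : L) ⊗ₜ[K] α) with hψ
  set e : L ⊗[K] L := ψ q with he
  have hψfL : ψ fL = 0 := by
    rw [hψ, hfL]
    have h1 : (Polynomial.aeval ((1 : L) ⊗ₜ[K] α)) (f.map (algebraMap K L))
        = (Polynomial.aeval ((1 : L) ⊗ₜ[K] α)) f :=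
      Polynomial.aeval_map_algebraMap L _ f
    have h2 : ((1 : L) ⊗ₜ[K] α) = Algebra.TensorProduct.includeRight (R := K) (A := L) α := rfl
    rw [h1, h2, Polynomial.aeval_algHom_apply, minpoly.aeval, map_zero]
  -- key identity: (1 ⊗ b) * e = (σ b ⊗ 1) * e for all b
  have hα_mem : ((1 : L) ⊗ₜ[K] α) * e = ((σ α) ⊗ₜ[K] (1 : L)) * e := by
    have hX : ψ X = (1 : L) ⊗ₜ[K] α := by simp [hψ]
    have hC : ψ (C (σ α)) = (σ α) ⊗ₜ[K] (1 : L) := by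
      simp [hψ, Algebra.TensorProduct.algebraMap_apply]
    have : ψ ((X - C (σ α)) * q) = 0 := by rw [← hq]; exact hψfL
    rw [sub_mul, map_sub, map_mul, map_mul, hX, hC, sub_eq_zero] at this
    rw [he]; exact this
  have hadj : Algebra.adjoin K {α} = ⊤ := by
    have h1 := IntermediateField.adjoin_simple_toSubalgebra_of_isAlgebraic hint.isAlgebraic
    rw [hα] at h1
    exact h1.symm.trans IntermediateField.top_toSubalgebra
  have hkey : ∀ b : L, ((1 : L) ⊗ₜ[K] b) * e = ((σ b) ⊗ₜ[K] (1 : L)) * e := by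
    intro b
    have hb : b ∈ Algebra.adjoin K ({α} : Set L) := by rw [hadj]; trivial
    induction hb using Algebra.adjoin_induction with
    | mem x hx =>
        rcases Set.mem_singleton_iff.mp hx with rfl
        exact hα_mem
    | algebraMap r =>
        have h2 : ((1 : L) ⊗ₜ[K] (algebraMap K L r))
            = ((algebraMap K L r) ⊗ₜ[K] (1 : L)) := by
          rw [Algebra.algebraMap_eq_smul_one, TensorProduct.tmul_smul, TensorProduct.smul_tmul']
        rw [AlgEquiv.commutes, h2]
    | add x y hx hy ihx ihy =>
        rw [map_add, TensorProduct.tmul_add, TensorProduct.add_tmul, add_mul, add_mul, ihx, ihy]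
    | mul x y hx hy ihx ihy =>
        have h1 : ((1 : L) ⊗ₜ[K] (x * y)) = ((1 : L) ⊗ₜ[K] x) * ((1 : L) ⊗ₜ[K] y) := by
          simp [Algebra.TensorProduct.tmul_mul_tmul]
        have h2 : ((σ (x * y)) ⊗ₜ[K] (1 : L)) = ((σ x) ⊗ₜ[K] (1 : L)) * ((σ y) ⊗ₜ[K] (1 : L)) := by
          simp [Algebra.TensorProduct.tmul_mul_tmul]
        rw [h1, h2, mul_assoc, ihy, ← mul_assoc, mul_comm ((1 : L) ⊗ₜ[K] x),
          mul_assoc, ihx, ← mul_assoc, mul_comm ((σ y) ⊗ₜ[K] (1 : L))]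
  -- the map Θ : L ⊗ L → L ⊗ V
  have hφv : ∀ (k : K) (c : L), (k • c) • v = k • (c • v) := fun k c => smul_assoc k c v
  set φv : L →ₗ[K] V :=
    { toFun := fun c => c • v
      map_add' := fun x y => add_smul x y v
      map_smul' := fun k c => hφv k c } with hφvdef
  set Θ : L ⊗[K] L →ₗ[L] L ⊗[K] V := LinearMap.baseChange L φv with hΘ
  refine ⟨Θ e, ?_, ?_⟩
  · -- nonzero: push forward by x ⊗ u ↦ σ⁻¹ x • u
    set εσ : L ⊗[K] L →ₐ[L] L :=
      Algebra.TensorProduct.lift (AlgHom.id L L) (σ : L →ₐ[K] L)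
        (fun x y => Commute.all _ _) with hεσ
    set B : L →ₗ[K] V →ₗ[K] V :=
      { toFun := fun c => (((σ.symm c) • (LinearMap.id : V →ₗ[K] V)) : V →ₗ[K] V)
        map_add' := by intro x y; simp [map_add, add_smul]
        map_smul' := by intro k c; simp [map_smul, smul_assoc] } with hB
    set h : L ⊗[K] V →ₗ[K] V := TensorProduct.lift B with hh
    have hcomp : h.comp (Θ.restrictScalars K)
        = φv.comp (σ.symm.toLinearMap.comp (εσ.toLinearMap.restrictScalars K)) := by
      apply TensorProduct.ext'
      intro x y
      simp only [LinearMap.comp_apply, LinearMap.restrictScalars_apply, hΘ,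
        LinearMap.baseChange_tmul, hh, TensorProduct.lift.tmul, hB, hεσ,
        Algebra.TensorProduct.lift_tmul, AlgEquiv.toLinearMap_apply, AlgHom.toLinearMap_apply,
        AlgHom.coe_id, id_eq, AlgHom.coe_coe, hφvdef]
      simp only [LinearMap.coe_mk, AddHom.coe_mk, LinearMap.smul_apply, LinearMap.id_apply]
      rw [map_mul, show σ.symm ((σ : L →ₐ[K] L) y) = y from σ.symm_apply_apply y, smul_smul]
    intro h0
    have h1 : h (Θ e) = σ.symm (εσ e) • v := by
      have := congrArg (fun (g : L ⊗[K] L →ₗ[K] V) => g e) hcomp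
      exact this
    have h2 : εσ e = q.eval (σ α) := by
      have h3 : εσ ((1 : L) ⊗ₜ[K] α) = σ α := by
        rw [hεσ, Algebra.TensorProduct.lift_tmul]; simp
      calc εσ e = (Polynomial.aeval (εσ ((1 : L) ⊗ₜ[K] α))) q :=
            (Polynomial.aeval_algHom_apply εσ ((1 : L) ⊗ₜ[K] α) q).symm
        _ = q.eval (σ α) := by
            rw [h3, Polynomial.aeval_def, Polynomial.eval₂_eq_eval_map]
            simp
    rw [h0, map_zero] at h1
    have : σ.symm (εσ e) ≠ 0 := by
      rw [h2]; simpa using hqev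
    exact this (by
      by_contra hne
      exact hv ((smul_eq_zero.mp h1.symm).resolve_left hne))
  · -- eigenvector property
    intro i
    set Bi := LinearMap.baseChange L ((T i).restrictScalars K) with hBi
    have hcomp : (Bi.restrictScalars K).comp (Θ.restrictScalars K)
        = (Θ.restrictScalars K).comp (LinearMap.mulLeft K ((1 : L) ⊗ₜ[K] (a i))) := by
      apply TensorProduct.ext'
      intro x y
      simp only [LinearMap.comp_apply, LinearMap.restrictScalars_apply, hΘ, hBi,
        LinearMap.baseChange_tmul, LinearMap.mulLeft_apply,
        Algebra.TensorProduct.tmul_mul_tmul, one_mul]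
      congr 1
      show T i (φv y) = φv (a i * y)
      simp only [hφvdef, LinearMap.coe_mk, AddHom.coe_mk]
      rw [map_smul, hev i, smul_smul, mul_comm]
    have step1 : Bi (Θ e) = Θ (((1 : L) ⊗ₜ[K] (a i)) * e) := by
      have := congrArg (fun (g : L ⊗[K] L →ₗ[K] (L ⊗[K] V)) => g e) hcomp
      simpa using this
    rw [step1, hkey (a i)]
    have : ((σ (a i)) ⊗ₜ[K] (1 : L)) * e = σ (a i) • e := by
      rw [Algebra.smul_def, Algebra.TensorProduct.algebraMap_apply]
      rfl
    rw [this, map_smul]
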